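/- Let p ≥ 2 be real, let g, r, s > 0 be reals, define φ(f) = g·f − r·f² − s·f^p for f ≥ 0, and let f* be a maximizer of φ over [0, ∞). Then for any 0 ≤ δ ≤ 1/p and any f ≥ 0 with (1 − δ)f* ≤ f ≤ (1 + δ)f*, one has φ(f*) − φ(f) ≤ 4δ·f*·g. -/

import Mathlib

/-- On `[0,1]`, `exp x ≤ 1 + e·x` (with `e < 2.7182818286`). -/
lemma aux_exp_le (x : ℝ) (hx0 : 0 ≤ x) (hx1 : x ≤ 1) :
    Real.exp x ≤ 1 + 2.7182818286 * x := by
  have h1 := Real.add_one_le_exp (-x)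
  have h5 : 0 < Real.exp x := Real.exp_pos x
  have h7 : (-x + 1) * Real.exp x ≤ 1 := by
    calc (-x + 1) * Real.exp x ≤ Real.exp (-x) * Real.exp x :=
          mul_le_mul_of_nonneg_right h1 h5.le
      _ = 1 := by rw [← Real.exp_add]; simp
  have h3 : Real.exp x ≤ Real.exp 1 := Real.exp_le_exp.mpr hx1
  have h4 : Real.exp 1 < 2.7182818286 := Real.exp_one_lt_d9
  nlinarith [mul_le_mul_of_nonneg_left (h3.trans h4.le) hx0]

/-- Scalar self-loop problem, stability of the value near the maximizer: if `f*`
maximizes `φ(f) = g f − r f² − s f^p` over `[0, ∞)`, then for any `0 ≤ δ ≤ 1/p` and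
any `f ≥ 0` with `(1−δ) f* ≤ f ≤ (1+δ) f*`, one has `φ(f*) − φ(f) ≤ 4 δ f* g`. -/
theorem self_loop_value_stability (p : ℝ) (hp : 2 ≤ p)
    (g r s : ℝ) (hg : 0 < g) (hr : 0 < r) (hs : 0 < s)
    (fstar : ℝ) (hfstar : 0 ≤ fstar)
    (hmax : ∀ f : ℝ, 0 ≤ f →
      g * f - r * f ^ 2 - s * f ^ p ≤ g * fstar - r * fstar ^ 2 - s * fstar ^ p)
    (δ : ℝ) (hδ0 : 0 ≤ δ) (hδp : δ ≤ 1 / p)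
    (f : ℝ) (hf0 : 0 ≤ f)
    (hflb : (1 - δ) * fstar ≤ f) (hfub : f ≤ (1 + δ) * fstar) :
    (g * fstar - r * fstar ^ 2 - s * fstar ^ p) -
        (g * f - r * f ^ 2 - s * f ^ p) ≤ 4 * δ * fstar * g := by
  have hp0 : (0 : ℝ) < p := by linarith
  have hA0 : (0 : ℝ) ≤ r * fstar ^ 2 := by positivity
  have hB0 : (0 : ℝ) ≤ s * fstar ^ p := mul_nonneg hs.le (Real.rpow_nonneg hfstar p)
  have hδp1 : δ * p ≤ 1 := (le_div_iff₀ hp0).mp hδp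
  have hδhalf : δ ≤ 1 / 2 := by
    have h2δ : δ * 2 ≤ δ * p := mul_le_mul_of_nonneg_left hp hδ0
    linarith
  -- ε := 1/(10 p)
  set ε : ℝ := (10 * p)⁻¹ with hεdef
  have hε0 : 0 < ε := by rw [hεdef]; positivity
  have hε20 : ε ≤ 1 / 20 := by
    rw [hεdef, show (1 / 20 : ℝ) = (20 : ℝ)⁻¹ by norm_num]
    exact inv_anti₀ (by norm_num) (by linarith)
  have hpε : p * ε = 1 / 10 := by
    rw [hεdef]; field_simp
  have h1mε : 0 < 1 - ε := by linarith
  -- Bernoulli ⇒ (1-ε)^p ≤ 10/11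
  have hw : (1 - ε) ^ p ≤ (10 : ℝ) / 11 := by
    have hy : (-1 : ℝ) ≤ ε / (1 - ε) :=
      le_trans (by norm_num) (by positivity : (0 : ℝ) ≤ ε / (1 - ε))
    have hb := one_add_mul_self_le_rpow_one_add hy (by linarith : (1 : ℝ) ≤ p)
    have hyval : 1 + ε / (1 - ε) = (1 - ε)⁻¹ := by field_simp; ring
    rw [hyval, Real.inv_rpow h1mε.le] at hb
    have hppos : 0 < (1 - ε) ^ p := Real.rpow_pos_of_pos h1mε p
    have h2 : p * (ε / (1 - ε)) = 1 / 10 / (1 - ε) := by rw [← hpε]; ring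
    have hpeps : (11 : ℝ) / 10 ≤ 1 + p * (ε / (1 - ε)) := by
      rw [h2]
      have hd : (1 : ℝ) / 10 ≤ 1 / 10 / (1 - ε) := by
        rw [le_div_iff₀ h1mε]; nlinarith
      linarith
    have hb' : (11 : ℝ) / 10 ≤ ((1 - ε) ^ p)⁻¹ := le_trans hpeps hb
    have h := mul_le_mul_of_nonneg_left hb' hppos.le
    rw [mul_inv_cancel₀ hppos.ne'] at h
    linarith
  -- optimality at (1-ε) f*
  have h1 := hmax ((1 - ε) * fstar) (mul_nonneg h1mε.le hfstar)
  rw [Real.mul_rpow h1mε.le hfstar] at h1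
  have hwB : (s * fstar ^ p) * ((1 - ε) ^ p) ≤ (s * fstar ^ p) * (10 / 11) :=
    mul_le_mul_of_nonneg_left hw hB0
  have step3 : r * fstar ^ 2 * (ε * (2 - ε)) + (1 / 11) * (s * fstar ^ p)
      ≤ g * fstar * ε := by linarith [h1, hwB]
  have step4 : (39 / 20) * (r * fstar ^ 2) + (10 / 11) * (p * (s * fstar ^ p))
      ≤ g * fstar := by
    rw [← mul_le_mul_iff_right₀ hε0]
    have heqB : ε * ((10 / 11) * (p * (s * fstar ^ p)))
        = (1 / 11) * (s * fstar ^ p) := by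
      rw [show ε * ((10 / 11) * (p * (s * fstar ^ p)))
          = (10 / 11) * ((p * ε) * (s * fstar ^ p)) by ring, hpε]
      ring
    have hAε : 0 ≤ (r * fstar ^ 2 * ε) * (1 / 20 - ε) :=
      mul_nonneg (mul_nonneg hA0 hε0.le) (by linarith)
    linarith [step3, heqB, hAε]
  -- bound on f^p
  have h1δ : (0 : ℝ) < 1 + δ := by linarith
  have hpow : (1 + δ) ^ p ≤ 1 + 2.7182818286 * (p * δ) := by
    have hlog_le : Real.log (1 + δ) ≤ δ := by
      have := Real.log_le_sub_one_of_pos h1δ; linarith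
    have hlog0 : 0 ≤ Real.log (1 + δ) := Real.log_nonneg (by linarith)
    have hx0 : 0 ≤ Real.log (1 + δ) * p := mul_nonneg hlog0 hp0.le
    have hlp : Real.log (1 + δ) * p ≤ δ * p := mul_le_mul_of_nonneg_right hlog_le hp0.le
    have hx1 : Real.log (1 + δ) * p ≤ 1 := le_trans hlp hδp1
    rw [Real.rpow_def_of_pos h1δ]
    have hax := aux_exp_le _ hx0 hx1
    linarith [hax, hlp]
  have hfp : f ^ p ≤ (1 + δ) ^ p * fstar ^ p := by
    calc f ^ p ≤ ((1 + δ) * fstar) ^ p := Real.rpow_le_rpow hf0 hfub hp0.le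
      _ = (1 + δ) ^ p * fstar ^ p := Real.mul_rpow h1δ.le hfstar
  have c3 : s * f ^ p - s * fstar ^ p
      ≤ 2.7182818286 * ((p * δ) * (s * fstar ^ p)) := by
    have h3a := mul_le_mul_of_nonneg_left hfp hs.le
    have h3b := mul_le_mul_of_nonneg_right hpow hB0
    linarith [h3a, h3b]
  have c2 : r * f ^ 2 - r * fstar ^ 2 ≤ (2 * δ + δ ^ 2) * (r * fstar ^ 2) := by
    have h2a : f * f ≤ ((1 + δ) * fstar) * ((1 + δ) * fstar) :=
      mul_self_le_mul_self hf0 hfub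
    linarith [mul_le_mul_of_nonneg_left h2a hr.le]
  have c1 : g * fstar - g * f ≤ δ * (g * fstar) := by
    linarith [mul_le_mul_of_nonneg_left hflb hg.le]
  have c4 := mul_le_mul_of_nonneg_left step4 (by linarith : (0 : ℝ) ≤ 3 * δ)
  have c5 : δ ^ 2 * (r * fstar ^ 2) ≤ (1 / 2) * (δ * (r * fstar ^ 2)) := by
    have := mul_nonneg (mul_nonneg hδ0 hA0) (by linarith : (0 : ℝ) ≤ 1 / 2 - δ)
    linarith [this]
  have c6 : 0 ≤ δ * (r * fstar ^ 2) := mul_nonneg hδ0 hA0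
  have c7 : 0 ≤ (p * δ) * (s * fstar ^ p) := mul_nonneg (mul_nonneg hp0.le hδ0) hB0
  linarith [c1, c2, c3, c4, c5, c6, c7]
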